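/- arXiv:2105.10898 — 3 statements merged into one kernel-verified Lean document; each statement's English description precedes it below -/
import Mathlib

section
/- Let Λ be a ring, X a left Λ-module with endomorphism ring T = End_Λ(X), and suppose the functor Hom_Λ(X, −) : Λ-Mod → T-Mod is fully faithful on a full subcategory containing injective envelopes. If E is an injective left Λ-module and X is a generator of Λ-Mod, then Hom_Λ(X, E) is an injective left T-module. -/
universe u v

variable (Λ : Type v) [Ring Λ]

/-- `X` is a generator of `Λ`-Mod: the images of all maps `X → M` generate every
module `M`. -/
def IsGeneratorMod (X : Type v) [AddCommGroup X] [Module Λ X] : Prop :=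
  ∀ (M : Type v) [AddCommGroup M] [Module Λ M] (N : Submodule Λ M),
    (∀ f : X →ₗ[Λ] M, LinearMap.range f ≤ N) → N = ⊤

/-- `Hom_Λ(X, M)` is a left module over `T = End_Λ(X)ᵐᵒᵖ` (the endomorphism ring of
`X` with maps written on the right, as in the paper) via precomposition. -/
instance endOpModule (X : Type v) [AddCommGroup X] [Module Λ X]
    (M : Type v) [AddCommGroup M] [Module Λ M] :
    Module (Module.End Λ X)ᵐᵒᵖ (X →ₗ[Λ] M) where
  smul t g := g.comp t.unop
  one_smul g := LinearMap.comp_id g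
  mul_smul s t g := by
    show g.comp (t.unop * s.unop) = (g.comp t.unop).comp s.unop
    ext x; rfl
  smul_zero t := LinearMap.zero_comp t.unop
  smul_add t g h := LinearMap.add_comp _ _ _
  add_smul s t g := by
    show g.comp (s.unop + t.unop) = g.comp s.unop + g.comp t.unop
    ext x; simp
  zero_smul g := by
    show g.comp (0 : Module.End Λ X) = 0
    ext x; simp

/-- Let `X` be a generator of `Λ`-Mod with endomorphism ring
`T = End_Λ(X)`, and suppose the functor `Hom_Λ(X, −)` is fully faithful on a full
subcategory `C` containing injective envelopes (in particular all injective modules).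
If `E` is injective, then `Hom_Λ(X, E)` is an injective left `T`-module. -/
theorem hom_X_E_injective_T_module
    (X : Type v) [AddCommGroup X] [Module Λ X] (hgen : IsGeneratorMod Λ X)
    (C : ModuleCat.{v} Λ → Prop)
    -- `C` contains injective envelopes (every injective module is its own
    -- injective envelope, so `C` contains all injective modules)
    (hC : ∀ M : ModuleCat.{v} Λ, Module.Injective Λ M → C M)
    -- `Hom_Λ(X, −)` is full on `C`: every additive `T`-equivariant map
    -- `Hom(X,M) → Hom(X,N)` is induced by some `f : M → N` ...
    (hfull : ∀ M N : ModuleCat.{v} Λ, C M → C N →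
      ∀ φ : (X →ₗ[Λ] M) →+ (X →ₗ[Λ] N),
        (∀ (t : (Module.End Λ X)ᵐᵒᵖ) (g : X →ₗ[Λ] M), φ (t • g) = t • (φ g)) →
        ∃ f : M →ₗ[Λ] N, ∀ g : X →ₗ[Λ] M, φ g = f.comp g)
    -- ... and faithful on `C`
    (hfaithful : ∀ M N : ModuleCat.{v} Λ, C M → C N →
      Function.Injective (fun (f : M →ₗ[Λ] N) => fun g : X →ₗ[Λ] M => f.comp g))
    (E : ModuleCat.{v} Λ) (hE : Module.Injective Λ E) :
    Module.Injective (Module.End Λ X)ᵐᵒᵖ (X →ₗ[Λ] E) := by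
  classical
  apply Module.Baer.injective
  intro I g
  -- Finite key claim: relations among elements of `I` applied to `X` are preserved by `g`.
  have key : ∀ (ι : Type v) (_ : Fintype ι) (i : ι → I) (x : ι → X),
      (∑ k, (MulOpposite.unop (i k).1) (x k)) = 0 → (∑ k, g (i k) (x k)) = 0 := by
    intro ι _ i x hx
    let Qn : (ι → X) →ₗ[Λ] X :=
      LinearMap.lsum Λ (fun _ : ι => X) ℕ (fun k => MulOpposite.unop (i k).1)
    let Rn : (ι → X) →ₗ[Λ] E :=
      LinearMap.lsum Λ (fun _ : ι => X) ℕ (fun k => (g (i k) : X →ₗ[Λ] E))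
    have htop : LinearMap.ker (Rn ∘ₗ (LinearMap.ker Qn).subtype) = ⊤ := by
      apply hgen
      rintro f _ ⟨y, rfl⟩
      simp only [LinearMap.mem_ker, LinearMap.comp_apply]
      set fk : ι → Module.End Λ X :=
        fun k => (LinearMap.proj k) ∘ₗ (LinearMap.ker Qn).subtype ∘ₗ f with hfk_def
      have hfk : (∑ k, (MulOpposite.op (fk k)) * (i k).1) = 0 := by
        apply MulOpposite.unop_injective
        rw [Finset.unop_sum]
        ext z
        simp only [MulOpposite.unop_mul, MulOpposite.unop_op, MulOpposite.unop_zero,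
          LinearMap.sum_apply, Module.End.mul_apply, LinearMap.zero_apply]
        have hz := LinearMap.map_coe_ker Qn (f z)
        simp only [Qn, LinearMap.lsum_apply, LinearMap.sum_apply, LinearMap.coe_comp,
          Function.comp_apply, LinearMap.proj_apply] at hz
        simp [fk]
        exact hz
      have hs : (∑ k, (MulOpposite.op (fk k)) • (i k)) = (0 : I) := by
        apply Subtype.ext
        push_cast [Submodule.coe_sum]
        simpa [smul_eq_mul] using hfk
      have hgsum : (∑ k, (MulOpposite.op (fk k)) • (g (i k))) = 0 := by
        have e : ∀ k ∈ Finset.univ, (MulOpposite.op (fk k)) • (g (i k))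
            = g ((MulOpposite.op (fk k)) • (i k)) := fun k _ => (map_smul g _ _).symm
        rw [Finset.sum_congr rfl e, ← map_sum, hs, map_zero]
      have hgsum' : ∀ z : X, (∑ k, g (i k) (fk k z)) = 0 := by
        intro z
        have := congrArg (fun (F : X →ₗ[Λ] E) => F z) hgsum
        rw [LinearMap.sum_apply, LinearMap.zero_apply] at this
        exact this
      have : Rn ((LinearMap.ker Qn).subtype (f y)) = ∑ k, g (i k) (fk k y) := by
        simp [Rn, LinearMap.lsum_apply, LinearMap.comp_apply, fk]
      rw [this, hgsum' y]
    have hxmem : x ∈ LinearMap.ker Qn := by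
      simpa [Qn, LinearMap.lsum_apply, LinearMap.comp_apply] using hx
    have := htop ▸ Submodule.mem_top (x := (⟨x, hxmem⟩ : LinearMap.ker Qn))
    have hRn : Rn x = 0 := by
      simpa [LinearMap.mem_ker, LinearMap.comp_apply] using this
    simpa [Rn, LinearMap.lsum_apply, LinearMap.comp_apply] using hRn
  -- The three maps out of the direct sum `⊕_{i ∈ I} X`.
  let P1 : (I →₀ X) →ₗ[Λ] X := Finsupp.lsum ℕ fun i => (MulOpposite.unop i.1 : X →ₗ[Λ] X)
  let P2 : (I →₀ X) →ₗ[Λ] E := Finsupp.lsum ℕ fun i => (g i : X →ₗ[Λ] E)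
  let P : (I →₀ X) →ₗ[Λ] (X × E) :=
    Finsupp.lsum ℕ fun i => LinearMap.prod (MulOpposite.unop i.1 : X →ₗ[Λ] X) (g i)
  have hP1 : (LinearMap.fst Λ X E) ∘ₗ P = P1 := by
    refine Finsupp.lhom_ext fun i x => ?_
    simp [P, P1, Finsupp.lsum_single]
  have hP2 : (LinearMap.snd Λ X E) ∘ₗ P = P2 := by
    refine Finsupp.lhom_ext fun i x => ?_
    simp [P, P2, Finsupp.lsum_single]
  -- P1 v = 0 → P2 v = 0
  have hker : ∀ v : I →₀ X, P1 v = 0 → P2 v = 0 := by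
    intro v hv
    have h1 : (∑ k : v.support, (MulOpposite.unop (k.1 : I).1) (v k.1)) = 0 := by
      rw [Finset.sum_coe_sort v.support (fun j => (MulOpposite.unop (j : I).1) (v j))]
      simpa [P1, Finsupp.lsum_apply, Finsupp.sum] using hv
    have h2 := key (↥v.support) inferInstance (fun k => k.1) (fun k => v k.1) h1
    rw [Finset.sum_coe_sort v.support (fun j => g j (v j))] at h2
    simpa [P2, Finsupp.lsum_apply, Finsupp.sum] using h2
  -- The graph submodule
  let G : Submodule Λ (X × E) := LinearMap.range P
  let π : G →ₗ[Λ] X := (LinearMap.fst Λ X E) ∘ₗ G.subtype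
  let h₀ : G →ₗ[Λ] E := (LinearMap.snd Λ X E) ∘ₗ G.subtype
  have hπ : Function.Injective π := by
    rw [← LinearMap.ker_eq_bot]
    rw [Submodule.eq_bot_iff]
    rintro ⟨γ, v, (rfl : P v = γ)⟩ hγ
    have h1 : P1 v = 0 := by
      rw [← hP1]
      exact hγ
    have h2 : P2 v = 0 := hker v h1
    apply Subtype.ext
    show P v = 0
    have e1 : (P v).1 = P1 v := congrArg (fun (F : (I →₀ X) →ₗ[Λ] X) => F v) hP1
    have e2 : (P v).2 = P2 v := congrArg (fun (F : (I →₀ X) →ₗ[Λ] E) => F v) hP2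
    ext
    · rw [e1, h1]; rfl
    · rw [e2, h2]; rfl
  obtain ⟨h, hh⟩ := hE.out π hπ h₀
  refine ⟨LinearMap.toSpanSingleton _ _ h, ?_⟩
  intro t mem
  rw [LinearMap.toSpanSingleton_apply]
  ext x
  have hmem : ((MulOpposite.unop t) x, g ⟨t, mem⟩ x) ∈ G := by
    refine ⟨Finsupp.single ⟨t, mem⟩ x, ?_⟩
    simp [P, Finsupp.lsum_single]
  have := hh ⟨_, hmem⟩
  exact this
end

section
/- Let Λ be a ring, X a generator in Λ-Mod, and T = End_Λ(X). Then the functor Hom_Λ(X, −) preserves essential extensions: if N ≤ M is an essential Λ-submodule, then Hom_Λ(X, N) is an essential T-submodule of Hom_Λ(X, M). -/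
universe u v

variable (Λ : Type v) [Ring Λ]

/-- The image of `Hom_Λ(X, N)` in `Hom_Λ(X, M)`, i.e. the maps `X → M` landing in the
submodule `N`, as a `T`-submodule of `Hom_Λ(X, M)`. -/
def homInto (X : Type v) [AddCommGroup X] [Module Λ X]
    (M : Type v) [AddCommGroup M] [Module Λ M] (N : Submodule Λ M) :
    Submodule (Module.End Λ X)ᵐᵒᵖ (X →ₗ[Λ] M) where
  carrier := {g | LinearMap.range g ≤ N}
  add_mem' := by
    intro g h hg hh
    rintro x ⟨y, rfl⟩
    exact N.add_mem (hg ⟨y, rfl⟩) (hh ⟨y, rfl⟩)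
  zero_mem' := by
    rintro x ⟨y, rfl⟩
    simp only [LinearMap.zero_apply]
    exact N.zero_mem
  smul_mem' := by
    rintro t g hg x ⟨y, rfl⟩
    exact hg ⟨t.unop y, rfl⟩

/-- If `X` is a generator of `Λ`-Mod, `T = End_Λ(X)`, and `N ≤ M` is an
essential `Λ`-submodule, then `Hom_Λ(X, N)` is an essential `T`-submodule of
`Hom_Λ(X, M)`, i.e. `Hom_Λ(X,−)` preserves essential extensions. -/
theorem hom_preserves_essential_extensions
    (X : Type v) [AddCommGroup X] [Module Λ X] (hgen : IsGeneratorMod Λ X)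
    (M : Type v) [AddCommGroup M] [Module Λ M] (N : Submodule Λ M)
    (hess : ∀ L : Submodule Λ M, L ≠ ⊥ → N ⊓ L ≠ ⊥) :
    ∀ L : Submodule (Module.End Λ X)ᵐᵒᵖ (X →ₗ[Λ] M), L ≠ ⊥ →
      homInto Λ X M N ⊓ L ≠ ⊥ := by
  intro L hL
  -- pick a nonzero g ∈ L
  obtain ⟨g, hgL, hg0⟩ := Submodule.exists_mem_ne_zero_of_ne_bot hL
  -- range g is nonzero
  have hrg : LinearMap.range g ≠ ⊥ := by
    intro h
    exact hg0 (LinearMap.range_eq_bot.mp h)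
  -- pick nonzero m ∈ N ⊓ range g
  obtain ⟨m, hm, hm0⟩ := Submodule.exists_mem_ne_zero_of_ne_bot (hess _ hrg)
  obtain ⟨hmN, x₀, hx₀⟩ := hm
  -- P = g ⁻¹ N
  set P : Submodule Λ X := N.comap g with hP
  have hx₀P : x₀ ∈ P := by
    show g x₀ ∈ N
    rw [hx₀]; exact hmN
  -- there exists h : X → X with range h ≤ P and g ∘ h ≠ 0
  have key : ∃ h : X →ₗ[Λ] X, LinearMap.range h ≤ P ∧ g.comp h ≠ 0 := by
    by_contra hcon
    push_neg at hcon
    -- k : P → M, restriction of g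
    set k : P →ₗ[Λ] M := g.comp P.subtype with hk
    have : LinearMap.ker k = ⊤ := by
      apply hgen P (LinearMap.ker k)
      intro f
      rintro y ⟨z, rfl⟩
      have hr : LinearMap.range (P.subtype.comp f) ≤ P := by
        rintro w ⟨u, rfl⟩
        exact (f u).2
      have := hcon (P.subtype.comp f) hr
      have h0 : g.comp (P.subtype.comp f) = 0 := this
      have : (g.comp (P.subtype.comp f)) z = 0 := by rw [h0]; rfl
      simpa [LinearMap.mem_ker, hk] using this
    have : k ⟨x₀, hx₀P⟩ = 0 := by
      have := LinearMap.ker_eq_top.mp this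
      rw [this]; rfl
    exact hm0 (by simpa [hk, hx₀] using this)
  obtain ⟨h, hhP, hgh⟩ := key
  -- g ∘ h lies in homInto ⊓ L and is nonzero
  intro hbot
  have hmem : g.comp h ∈ homInto Λ X M N ⊓ L := by
    constructor
    · rintro w ⟨u, rfl⟩
      exact hhP ⟨u, rfl⟩
    · exact L.smul_mem (MulOpposite.op h) hgL
  rw [hbot] at hmem
  exact hgh hmem
end

section
/- Let Λ be a left artinian ring and suppose every left Λ-module is a direct sum of finitely generated modules. Then every finitely generated left Λ-module is a finite direct sum of indecomposable modules, and hence Add(V) = Λ-Mod, where V is the direct sum of a complete set of representatives of isomorphism classes of finitely generated indecomposable left Λ-modules. -/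
universe v

open scoped DirectSum

/-- A module is indecomposable if it is nonzero and admits no nontrivial direct sum
decomposition. -/
def IndecompM (R : Type*) [Ring R] (M : Type*) [AddCommGroup M] [Module R M] : Prop :=
  Nontrivial M ∧ ∀ A B : Submodule R M, IsCompl A B → A = ⊥ ∨ B = ⊥

section Aux

variable {Λ : Type v} [Ring Λ]

/-- `IndecompM` is invariant under linear equivalence. -/
lemma IndecompM.of_linearEquiv {M M' : Type*} [AddCommGroup M] [Module Λ M]
    [AddCommGroup M'] [Module Λ M'] (e : M ≃ₗ[Λ] M') (h : IndecompM Λ M) :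
    IndecompM Λ M' := by
  obtain ⟨h1, h2⟩ := h
  haveI := h1
  refine ⟨e.symm.toEquiv.nontrivial, fun A B hAB => ?_⟩
  let o : Submodule Λ M ≃o Submodule Λ M' := Submodule.orderIsoMapComap e
  rcases h2 (o.symm A) (o.symm B) (o.symm.isCompl hAB) with h | h
  · left
    rw [← o.apply_symm_apply A, h, o.map_bot]
  · right
    rw [← o.apply_symm_apply B, h, o.map_bot]

/-- Independence of the union of two independent families whose sups are disjoint,
in a modular lattice. -/
lemma iSupIndep_sum_elim {α : Type*} [CompleteLattice α] [IsModularLattice α]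
    {ι κ : Type*} {f : ι → α} {g : κ → α} (hf : iSupIndep f) (hg : iSupIndep g)
    (h : Disjoint (⨆ i, f i) (⨆ j, g j)) : iSupIndep (Sum.elim f g) := by
  intro x
  cases x with
  | inl i =>
      have hle : (⨆ (j : ι ⊕ κ) (_ : j ≠ Sum.inl i), Sum.elim f g j) ≤
          (⨆ (j) (_ : j ≠ i), f j) ⊔ ⨆ j, g j := by
        refine iSup_le fun j => iSup_le fun hj => ?_
        cases j with
        | inl j' =>
            refine le_sup_of_le_left ?_
            exact le_iSup₂ (f := fun (j : ι) (_ : j ≠ i) => f j) j' (by simpa using hj)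
        | inr j' => exact le_sup_of_le_right (le_iSup g j')
      have hd2 : Disjoint (f i ⊔ ⨆ (j) (_ : j ≠ i), f j) (⨆ j, g j) := by
        refine h.mono_left ?_
        exact sup_le (le_iSup f i) (iSup₂_le fun j _ => le_iSup f j)
      exact Disjoint.mono_right hle ((hf i).disjoint_sup_right_of_disjoint_sup_left hd2)
  | inr i =>
      have hle : (⨆ (j : ι ⊕ κ) (_ : j ≠ Sum.inr i), Sum.elim f g j) ≤
          (⨆ (j) (_ : j ≠ i), g j) ⊔ ⨆ j, f j := by
        refine iSup_le fun j => iSup_le fun hj => ?_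
        cases j with
        | inl j' => exact le_sup_of_le_right (le_iSup f j')
        | inr j' =>
            refine le_sup_of_le_left ?_
            exact le_iSup₂ (f := fun (j : κ) (_ : j ≠ i) => g j) j' (by simpa using hj)
      have hd2 : Disjoint (g i ⊔ ⨆ (j) (_ : j ≠ i), g j) (⨆ j, f j) := by
        refine h.symm.mono_left ?_
        exact sup_le (le_iSup g i) (iSup₂_le fun j _ => le_iSup g j)
      exact Disjoint.mono_right hle ((hg i).disjoint_sup_right_of_disjoint_sup_left hd2)

/-- Every submodule of an artinian module is an (internal) finite direct sum of
indecomposable submodules, stated at the level of the lattice of submodules. -/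
lemma exists_indecomp_decomp {M : Type v} [AddCommGroup M] [Module Λ M] [IsArtinian Λ M]
    (S : Submodule Λ M) :
    ∃ (n : ℕ) (N : Fin n → Submodule Λ M),
      iSupIndep N ∧ iSup N = S ∧ ∀ k, IndecompM Λ (N k) := by
  induction S using WellFoundedLT.induction with
  | ind S IH =>
  by_cases hbot : S = ⊥
  · refine ⟨0, fun k => k.elim0, fun k => k.elim0, ?_, fun k => k.elim0⟩
    rw [hbot]
    exact iSup_of_empty _
  by_cases hins : IndecompM Λ S
  · refine ⟨1, fun _ => S, ?_, iSup_const, fun _ => hins⟩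
    intro i
    have hle : (⨆ (j : Fin 1) (_ : j ≠ i), (fun _ : Fin 1 => S) j) ≤ ⊥ :=
      iSup_le fun j => iSup_le fun hj => absurd (Subsingleton.elim j i) hj
    exact Disjoint.mono_right hle disjoint_bot_right
  · have hnt : Nontrivial S := Submodule.nontrivial_iff_ne_bot.mpr hbot
    rw [IndecompM] at hins
    push_neg at hins
    obtain ⟨A, B, hAB, hA, hB⟩ := hins hnt
    set A' := A.map S.subtype with hA'def
    set B' := B.map S.subtype with hB'def
    have hinj := Submodule.map_injective_of_injective
      (show Function.Injective S.subtype from Subtype.coe_injective)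
    have hsup : A' ⊔ B' = S := by
      rw [hA'def, hB'def, ← Submodule.map_sup, hAB.sup_eq_top, Submodule.map_subtype_top]
    have hdisj : Disjoint A' B' := by
      rw [disjoint_iff, hA'def, hB'def,
        ← Submodule.map_inf _ (show Function.Injective S.subtype from Subtype.coe_injective),
        hAB.inf_eq_bot, Submodule.map_bot]
    have hAle : A' ≤ S := hsup ▸ le_sup_left
    have hBle : B' ≤ S := hsup ▸ le_sup_right
    have hAS : A' < S := by
      rcases lt_or_eq_of_le hAle with h | h
      · exact h
      · exfalso
        have hle : B' ≤ A' := h ▸ hBle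
        have hBbot : B' = ⊥ := hdisj.symm.eq_bot_of_le hle
        exact hB (hinj (hBbot.trans (Submodule.map_bot S.subtype).symm))
    have hBS : B' < S := by
      rcases lt_or_eq_of_le hBle with h | h
      · exact h
      · exfalso
        have hle : A' ≤ B' := h ▸ hAle
        have hAbot : A' = ⊥ := hdisj.eq_bot_of_le hle
        exact hA (hinj (hAbot.trans (Submodule.map_bot S.subtype).symm))
    obtain ⟨m, NA, hNAi, hNAs, hNAind⟩ := IH A' hAS
    obtain ⟨p, NB, hNBi, hNBs, hNBind⟩ := IH B' hBS
    refine ⟨m + p, Sum.elim NA NB ∘ finSumFinEquiv.symm, ?_, ?_, ?_⟩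
    · exact (iSupIndep_sum_elim hNAi hNBi
        (by rw [hNAs, hNBs]; exact hdisj)).comp finSumFinEquiv.symm.injective
    · rw [show iSup (Sum.elim NA NB ∘ ⇑finSumFinEquiv.symm) = iSup (Sum.elim NA NB) from
        finSumFinEquiv.symm.surjective.iSup_comp _, iSup_sum]
      simp only [Sum.elim_inl, Sum.elim_inr]
      rw [hNAs, hNBs, hsup]
    · intro k
      have key : ∀ x : Fin m ⊕ Fin p, IndecompM Λ ↥(Sum.elim NA NB x) := by
        rintro (j | j)
        · exact hNAind j
        · exact hNBind j
      exact key _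

end Aux

/-- Let `Λ` be left artinian and suppose every left `Λ`-module is a
direct sum of finitely generated (sub)modules.  Then every finitely generated left
`Λ`-module is a finite direct sum of indecomposable modules, and `Add(V) = Λ-Mod`:
every left `Λ`-module is (isomorphic to) a direct summand of a direct sum of copies of
the modules `V i`, where `{V i}` is a complete set of representatives of the
isomorphism classes of finitely generated indecomposable left `Λ`-modules. -/
theorem finite_decomposition_and_add_V_eq_Mod
    (Λ : Type v) [Ring Λ] [IsArtinian Λ Λ]
    (hdec : ∀ (M : Type v) [AddCommGroup M] [Module Λ M],
      ∃ (κ : Type v) (_ : DecidableEq κ) (N : κ → Submodule Λ M),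
        DirectSum.IsInternal N ∧ ∀ k, (N k).FG)
    (ι : Type v) [DecidableEq ι]
    (V : ι → Type v) [∀ i, AddCommGroup (V i)] [∀ i, Module Λ (V i)]
    [∀ i, Module.Finite Λ (V i)]
    (hind : ∀ i, IndecompM Λ (V i))
    (hpairwise : ∀ i j, i ≠ j → IsEmpty (V i ≃ₗ[Λ] V j))
    (hcomplete : ∀ (M : Type v) [AddCommGroup M] [Module Λ M],
      Module.Finite Λ M → IndecompM Λ M → ∃ i, Nonempty (M ≃ₗ[Λ] V i)) :
    -- (1) every finitely generated module is a finite direct sum of indecomposables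
    (∀ (M : Type v) [AddCommGroup M] [Module Λ M], Module.Finite Λ M →
      ∃ (n : ℕ) (N : Fin n → Submodule Λ M),
        DirectSum.IsInternal N ∧ ∀ k, IndecompM Λ (N k)) ∧
    -- (2) `Add(V) = Λ-Mod`
    (∀ (M : Type v) [AddCommGroup M] [Module Λ M],
      ∃ (A : Type v) (_ : DecidableEq A) (f : A → ι)
        (Q : Type v) (_ : AddCommGroup Q) (_ : Module Λ Q),
        Nonempty ((M × Q) ≃ₗ[Λ] DirectSum A fun a => V (f a))) := by
  have part1 : ∀ (M : Type v) [AddCommGroup M] [Module Λ M], Module.Finite Λ M →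
      ∃ (n : ℕ) (N : Fin n → Submodule Λ M),
        DirectSum.IsInternal N ∧ ∀ k, IndecompM Λ (N k) := by
    intro M _ _ hM
    haveI := hM
    haveI : IsArtinian Λ M := inferInstance
    obtain ⟨n, N, hi, hs, hind'⟩ := exists_indecomp_decomp (⊤ : Submodule Λ M)
    exact ⟨n, N, DirectSum.isInternal_submodule_of_iSupIndep_of_iSup_eq_top hi hs, hind'⟩
  refine ⟨part1, ?_⟩
  intro M _ _
  obtain ⟨κ, _, N, hN, hfg⟩ := hdec M
  haveI hNF : ∀ k, Module.Finite Λ (N k) := fun k => Module.Finite.iff_fg.mpr (hfg k)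
  choose n P hPint hPind using fun k => part1 (N k) (hNF k)
  have hPfin : ∀ k j, Module.Finite Λ (P k j) := by
    intro k j
    obtain ⟨hi, hs⟩ :=
      (DirectSum.isInternal_submodule_iff_iSupIndep_and_iSup_eq_top (P k)).mp (hPint k)
    have hcompl : IsCompl (P k j) (⨆ (l) (_ : l ≠ j), P k l) :=
      ⟨hi j, codisjoint_iff.mpr (by rw [← hs]; exact (iSup_split_single (P k) j).symm)⟩
    exact Module.Finite.of_surjective (Submodule.linearProjOfIsCompl _ _ hcompl)
      (fun x => ⟨x, Submodule.linearProjOfIsCompl_apply_left hcompl x⟩)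
  choose g hg using fun k j => hcomplete (P k j) (hPfin k j) (hPind k j)
  refine ⟨Σ k, Fin (n k), Classical.decEq _, fun a => g a.1 a.2, PUnit.{v+1},
    inferInstance, inferInstance, ⟨?_⟩⟩
  have e0 : (M × PUnit.{v+1}) ≃ₗ[Λ] M :=
    { Equiv.prodPUnit M with
      map_add' := fun _ _ => rfl
      map_smul' := fun _ _ => rfl }
  have e1 : (⨁ k, N k) ≃ₗ[Λ] M :=
    LinearEquiv.ofBijective (DirectSum.coeLinearMap N) hN
  have e2 : ∀ k, (⨁ j, P k j) ≃ₗ[Λ] N k := fun k =>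
    LinearEquiv.ofBijective (DirectSum.coeLinearMap (P k)) (hPint k)
  have e3 : (⨁ k, ⨁ j, P k j) ≃ₗ[Λ] ⨁ k, N k :=
    DFinsupp.mapRange.linearEquiv e2
  have e4 : (⨁ a : Σ k, Fin (n k), P a.1 a.2) ≃ₗ[Λ] ⨁ k, ⨁ j, P k j :=
    DirectSum.sigmaLcurryEquiv (R := Λ) (δ := fun k j => ↥(P k j))
  have e5 : (⨁ a : Σ k, Fin (n k), V (g a.1 a.2)) ≃ₗ[Λ] ⨁ a : Σ k, Fin (n k), P a.1 a.2 :=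
    DFinsupp.mapRange.linearEquiv (fun a => (hg a.1 a.2).some.symm)
  exact e0 ≪≫ₗ e1.symm ≪≫ₗ e3.symm ≪≫ₗ e4.symm ≪≫ₗ e5.symm
end
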